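/- arXiv:0904.0718 — 3 statements merged into one kernel-verified Lean document; each statement's English description precedes it below -/
import Mathlib

section
/- Let A = {a_1 < a_2 < ... < a_{m^2}} be positive reals with no dyadic interval [x,2x] containing m or more elements of A. Define B = {a_1, a_{2m+1}, a_{4m+1}, ..., a_{m^2-m+1}}. Then any two consecutive elements b < b' of B satisfy b' > 2b, i.e., B is a lacunary (super-geometric) sequence with ratio greater than 2. -/
open Finset

/-- If `a 0 < a 1 < ⋯ < a (m^2 - 1)` are positive reals with no dyadic interval
`[x,2x]` containing `m` or more of them, then the subsequence of every `2m`-th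
element is lacunary with ratio more than `2`. -/
theorem stmt_1 (m : ℕ) (hm : 1 ≤ m) (a : ℕ → ℝ)
    (hpos : ∀ i < m ^ 2, 0 < a i)
    (hmono : ∀ i j : ℕ, i < j → j < m ^ 2 → a i < a j)
    (hdyadic : ∀ x : ℝ, 0 < x →
      ((Finset.range (m ^ 2)).filter (fun i => x ≤ a i ∧ a i ≤ 2 * x)).card < m) :
    ∀ i : ℕ, 2 * m * (i + 1) < m ^ 2 → 2 * a (2 * m * i) < a (2 * m * (i + 1)) := by
  intro i hi
  by_contra h
  push_neg at h
  have hle : 2 * m * i ≤ 2 * m * (i + 1) := Nat.mul_le_mul le_rfl (by omega)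
  have h1 : 2 * m * i < m ^ 2 := lt_of_le_of_lt hle hi
  have hxpos : 0 < a (2 * m * i) := hpos _ h1
  have key := hdyadic (a (2 * m * i)) hxpos
  have hsub : Finset.Icc (2 * m * i) (2 * m * (i + 1)) ⊆
      (Finset.range (m ^ 2)).filter
        (fun j => a (2 * m * i) ≤ a j ∧ a j ≤ 2 * a (2 * m * i)) := by
    intro j hj
    simp only [Finset.mem_Icc] at hj
    obtain ⟨hj1, hj2⟩ := hj
    have hjlt : j < m ^ 2 := lt_of_le_of_lt hj2 hi
    simp only [Finset.mem_filter, Finset.mem_range]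
    refine ⟨hjlt, ?_, ?_⟩
    · rcases eq_or_lt_of_le hj1 with he | hl
      · rw [he]
      · exact (hmono _ _ hl hjlt).le
    · rcases eq_or_lt_of_le hj2 with he | hl
      · rw [he]; exact h
      · exact le_trans (hmono _ _ hl hi).le h
  have hcard := Finset.card_le_card hsub
  rw [Nat.card_Icc] at hcard
  have heq : 2 * m * (i + 1) = 2 * m * i + 2 * m := by ring
  omega
end

section
/- (Base step of the distinct-sums lemma) With notation as in the distinct sums lemma: if c_1 + Σ_{i=2}^{k} c_i δ_{i-1} = c'_1 + Σ_{i=2}^{k} c'_i δ_{i-1}, where c_1, c'_1 ∈ C_1, c_i, c'_i ∈ C_i for i ≥ 2, all elements of C_1 exceed all elements of C_2 ∪ ... ∪ C_k, δ_1 > δ_2 > ... > δ_{k-1} > 0 with δ_1 ≤ 1, Σ_{i=2}^{k} 2δ_{i-1} ≤ 2k·δ_1, and for all c > d in C one has c/d − 1 > 2k·δ_1, then c_1 = c'_1. -/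
open Finset

/-- Base step of the distinct-sums lemma: under the separation hypothesis the
leading coefficients of two equal weighted sums must agree. -/
theorem stmt_4 (k : ℕ) (hk : 2 ≤ k) (δ : ℕ → ℝ)
    (hδdec : ∀ i, 1 ≤ i → i < k - 1 → δ (i + 1) < δ i)
    (hδpos : ∀ i, 1 ≤ i → i ≤ k - 1 → 0 < δ i)
    (hδ1 : δ 1 ≤ 1)
    (hδsum : ∑ i ∈ Finset.Icc 1 (k - 1), 2 * δ i ≤ 2 * (k : ℝ) * δ 1)
    (C : ℕ → Finset ℝ)
    (hCpos : ∀ i, i < k → ∀ c ∈ C i, (0:ℝ) < c)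
    (hCord : ∀ j, 1 ≤ j → j < k → ∀ c ∈ C 0, ∀ d ∈ C j, d < c)
    (hsep : ∀ i j, i < k → j < k → ∀ c ∈ C i, ∀ d ∈ C j, d < c →
      2 * (k : ℝ) * δ 1 < c / d - 1)
    (f g : ℕ → ℝ) (hf : ∀ i, i < k → f i ∈ C i) (hg : ∀ i, i < k → g i ∈ C i)
    (hsum : f 0 + ∑ i ∈ Finset.Icc 1 (k - 1), f i * δ i =
            g 0 + ∑ i ∈ Finset.Icc 1 (k - 1), g i * δ i) :
    f 0 = g 0 := by
  have hk1 : 1 ≤ k - 1 := by omega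
  have hδ1pos : 0 < δ 1 := hδpos 1 le_rfl hk1
  have key : ∀ F G : ℕ → ℝ, (∀ i, i < k → F i ∈ C i) → (∀ i, i < k → G i ∈ C i) →
      F 0 + ∑ i ∈ Finset.Icc 1 (k - 1), F i * δ i =
        G 0 + ∑ i ∈ Finset.Icc 1 (k - 1), G i * δ i →
      ¬ G 0 < F 0 := by
    intro F G hF hG hS hlt
    have hG0 : (0:ℝ) < G 0 := hCpos 0 (by omega) _ (hG 0 (by omega))
    have hsep' := hsep 0 0 (by omega) (by omega) (F 0) (hF 0 (by omega))
      (G 0) (hG 0 (by omega)) hlt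
    have h1 : 2 * (k:ℝ) * δ 1 * G 0 < F 0 - G 0 := by
      have h := mul_lt_mul_of_pos_right hsep' hG0
      rw [sub_mul, one_mul, div_mul_cancel₀ _ (ne_of_gt hG0)] at h
      exact h
    have hbound : ∀ i ∈ Finset.Icc 1 (k - 1), (G i - F i) * δ i ≤ G 0 * δ i := by
      intro i hi
      obtain ⟨hi1, hi2⟩ := Finset.mem_Icc.mp hi
      have hik : i < k := by omega
      have hlt' : G i < G 0 := hCord i hi1 hik _ (hG 0 (by omega)) _ (hG i hik)
      have hFi : 0 < F i := hCpos i hik _ (hF i hik)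
      have hδi : 0 < δ i := hδpos i hi1 hi2
      nlinarith
    have hsum2 : ∑ i ∈ Finset.Icc 1 (k - 1), (G i - F i) * δ i ≤
        ∑ i ∈ Finset.Icc 1 (k - 1), G 0 * δ i := Finset.sum_le_sum hbound
    have hsum3 : ∑ i ∈ Finset.Icc 1 (k - 1), G 0 * δ i ≤ G 0 * ((k:ℝ) * δ 1) := by
      rw [← Finset.mul_sum]
      have hs : ∑ i ∈ Finset.Icc 1 (k - 1), δ i ≤ (k:ℝ) * δ 1 := by
        have h2 : ∑ i ∈ Finset.Icc 1 (k - 1), 2 * δ i =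
            2 * ∑ i ∈ Finset.Icc 1 (k - 1), δ i := by rw [Finset.mul_sum]
        rw [h2] at hδsum
        linarith
      exact mul_le_mul_of_nonneg_left hs hG0.le
    have heq : F 0 - G 0 = ∑ i ∈ Finset.Icc 1 (k - 1), (G i - F i) * δ i := by
      have : ∑ i ∈ Finset.Icc 1 (k - 1), (G i - F i) * δ i =
          ∑ i ∈ Finset.Icc 1 (k - 1), G i * δ i -
          ∑ i ∈ Finset.Icc 1 (k - 1), F i * δ i := by
        rw [← Finset.sum_sub_distrib]
        exact Finset.sum_congr rfl fun i _ => by ring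
      rw [this]; linarith
    nlinarith
  rcases lt_trichotomy (f 0) (g 0) with h | h | h
  · exact absurd h (key g f hg hf hsum.symm)
  · exact h
  · exact absurd h (key f g hf hg hsum)
end

section
/- Let k ≥ 2, 0 < c < c_0(k), 0 < ε < ε_0(k,c), and n > n_0(k,c,ε). Suppose A is a set of n positive reals with |A·A| < n^{1+ε} and B ⊆ A with |B| ≥ n^c. Then there exist θ_1, ..., θ_k ∈ B/B, each θ_i > 1, such that for at least n^{1−O_k(c)} values d ∈ A, all 2^k products θ_1^{γ_1}···θ_k^{γ_k}·d with each γ_i ∈ {0,1} belong to A. -/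
open Finset Pointwise

lemma energy_decomp (B D : Finset ℝ) (hB0 : ∀ b ∈ B, b ≠ 0) :
    Finset.mulEnergy B D =
      ∑ p ∈ B ×ˢ B, (D.filter fun d => (p.1 / p.2) * d ∈ D).card := by
  rw [← Finset.card_sigma]
  unfold Finset.mulEnergy
  apply Finset.card_bij' (fun x _ => (⟨x.1, x.2.1⟩ : Σ _ : ℝ × ℝ, ℝ))
    (fun y _ => ((y.1.1, y.1.2), (y.2, y.1.1 / y.1.2 * y.2)))
  · rintro ⟨⟨b1, b2⟩, d1, d2⟩ hx
    simp only [Finset.mem_filter, Finset.mem_product] at hx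
    obtain ⟨⟨⟨hb1, hb2⟩, hd1, hd2⟩, heq⟩ := hx
    simp only [Finset.mem_sigma, Finset.mem_product, Finset.mem_filter]
    have h2 := hB0 b2 hb2
    have : b1 / b2 * d1 = d2 := by
      field_simp
      linarith [heq]
    exact ⟨⟨hb1, hb2⟩, hd1, by rw [this]; exact hd2⟩
  · rintro ⟨⟨b1, b2⟩, d⟩ hy
    simp only [Finset.mem_sigma, Finset.mem_product, Finset.mem_filter] at hy
    obtain ⟨⟨hb1, hb2⟩, hd, hd2⟩ := hy
    simp only [Finset.mem_filter, Finset.mem_product]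
    have h2 := hB0 b2 hb2
    refine ⟨⟨⟨hb1, hb2⟩, hd, hd2⟩, by field_simp⟩
  · rintro ⟨⟨b1, b2⟩, d1, d2⟩ hx
    simp only [Finset.mem_filter, Finset.mem_product] at hx
    obtain ⟨⟨⟨hb1, hb2⟩, hd1, hd2⟩, heq⟩ := hx
    have h2 := hB0 b2 hb2
    have : b1 / b2 * d1 = d2 := by field_simp; linarith [heq]
    simp [this]
  · rintro ⟨⟨b1, b2⟩, d⟩ hy
    rfl

lemma reflect_card (D : Finset ℝ) {θ : ℝ} (hθ : θ ≠ 0) :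
    (D.filter fun d => θ * d ∈ D).card = (D.filter fun d => θ⁻¹ * d ∈ D).card := by
  apply Finset.card_bij' (fun d _ => θ * d) (fun d _ => θ⁻¹ * d)
  · intro d hd
    simp only [Finset.mem_filter] at hd ⊢
    exact ⟨hd.2, by rw [inv_mul_cancel_left₀ hθ]; exact hd.1⟩
  · intro d hd
    simp only [Finset.mem_filter] at hd ⊢
    exact ⟨hd.2, by rw [mul_inv_cancel_left₀ hθ]; exact hd.1⟩
  · intro d _; rw [inv_mul_cancel_left₀ hθ]
  · intro d _; rw [mul_inv_cancel_left₀ hθ]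

lemma step_lemma {A B D : Finset ℝ} (hA : ∀ a ∈ A, (0:ℝ) < a) (hBA : B ⊆ A)
    (hDA : D ⊆ A) (hB2 : 2 ≤ B.card) :
    ∃ θ ∈ B / B, 1 < θ ∧
      (D.card : ℝ)^2 / ((A*A).card : ℝ) - (D.card : ℝ) / (B.card : ℝ)
        ≤ ((D.filter fun d => θ * d ∈ D).card : ℝ) := by
  have hBpos : ∀ b ∈ B, (0:ℝ) < b := fun b hb => hA b (hBA hb)
  have hB0 : ∀ b ∈ B, b ≠ 0 := fun b hb => ne_of_gt (hBpos b hb)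
  -- energy lower bound
  have h1 : B.card ^ 2 * D.card ^ 2 ≤ (A * A).card * Finset.mulEnergy B D := by
    calc B.card ^ 2 * D.card ^ 2 ≤ (B * D).card * Finset.mulEnergy B D :=
          Finset.le_card_mul_mul_mulEnergy B D
      _ ≤ (A * A).card * Finset.mulEnergy B D :=
          Nat.mul_le_mul_right _ (Finset.card_le_card (Finset.mul_subset_mul hBA hDA))
  -- decompose
  set h : ℝ × ℝ → ℕ := fun p => (D.filter fun d => (p.1 / p.2) * d ∈ D).card with hh
  have h2 : Finset.mulEnergy B D = ∑ p ∈ B ×ˢ B, h p := energy_decomp B D hB0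
  set S : Finset (ℝ × ℝ) := (B ×ˢ B).filter (fun p => p.1 ≠ p.2) with hS
  have hSne : S.Nonempty := by
    obtain ⟨a, ha, b, hb, hab⟩ := Finset.one_lt_card.mp hB2
    exact ⟨(a, b), by simp [hS, Finset.mem_product, ha, hb, hab]⟩
  obtain ⟨p₀, hp₀S, hp₀max⟩ := Finset.exists_max_image S h hSne
  have hsplit : ∑ p ∈ B ×ˢ B, h p
      = ∑ p ∈ (B ×ˢ B).filter (fun p => p.1 = p.2), h p + ∑ p ∈ S, h p :=
    (Finset.sum_filter_add_sum_filter_not _ _ _).symm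
  have hdiagcard : ((B ×ˢ B).filter (fun p => p.1 = p.2)).card ≤ B.card := by
    apply Finset.card_le_card_of_injOn (fun p => p.1)
    · intro p hp
      simp only [Finset.mem_coe, Finset.mem_filter, Finset.mem_product] at hp
      exact hp.1.1
    · rintro ⟨p1, p2⟩ hp ⟨q1, q2⟩ hq hpq
      simp only [Finset.coe_filter, Set.mem_setOf_eq, Finset.mem_product] at hp hq
      simp only at hpq
      cases hp.2
      cases hq.2
      rw [hpq]
  have hdiag : ∑ p ∈ (B ×ˢ B).filter (fun p => p.1 = p.2), h p ≤ B.card * D.card := by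
    calc ∑ p ∈ (B ×ˢ B).filter (fun p => p.1 = p.2), h p
        ≤ ∑ _p ∈ (B ×ˢ B).filter (fun p => p.1 = p.2), D.card :=
          Finset.sum_le_sum (fun p _ => Finset.card_le_card (Finset.filter_subset _ _))
      _ = ((B ×ˢ B).filter (fun p => p.1 = p.2)).card * D.card := by
          rw [Finset.sum_const, smul_eq_mul]
      _ ≤ B.card * D.card := by gcongr
  have hoff : ∑ p ∈ S, h p ≤ B.card ^ 2 * h p₀ := by
    calc ∑ p ∈ S, h p ≤ ∑ _p ∈ S, h p₀ := Finset.sum_le_sum hp₀max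
      _ = S.card * h p₀ := by rw [Finset.sum_const, smul_eq_mul]
      _ ≤ B.card ^ 2 * h p₀ := by
          gcongr
          calc S.card ≤ (B ×ˢ B).card := Finset.card_le_card (Finset.filter_subset _ _)
            _ = B.card ^ 2 := by rw [Finset.card_product, sq]
  have hE : B.card ^ 2 * D.card ^ 2 ≤ (A * A).card * (B.card * D.card + B.card ^ 2 * h p₀) := by
    calc B.card ^ 2 * D.card ^ 2 ≤ (A * A).card * Finset.mulEnergy B D := h1
      _ ≤ (A * A).card * (B.card * D.card + B.card ^ 2 * h p₀) := by
          rw [h2, hsplit]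
          exact mul_le_mul_right (Nat.add_le_add hdiag hoff) _
  -- cast to ℝ and rearrange
  have hBne : B.Nonempty := Finset.card_pos.mp (by omega)
  have hAne : A.Nonempty := hBne.mono hBA
  have hAA : (0:ℝ) < ((A * A).card : ℝ) := by
    exact_mod_cast Finset.card_pos.mpr (hAne.mul hAne)
  have hBr : (0:ℝ) < (B.card : ℝ) := by exact_mod_cast Finset.card_pos.mpr hBne
  have hER : (B.card:ℝ)^2 * (D.card:ℝ)^2
      ≤ ((A*A).card:ℝ) * ((B.card:ℝ) * D.card + (B.card:ℝ)^2 * h p₀) := by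
    exact_mod_cast hE
  have hkey : (D.card : ℝ)^2 / ((A*A).card : ℝ) - (D.card : ℝ) / (B.card : ℝ) ≤ (h p₀ : ℝ) := by
    rw [sub_le_iff_le_add, div_le_iff₀ hAA]
    have hB2pos : (0:ℝ) < (B.card:ℝ)^2 := by positivity
    have goal' : (B.card:ℝ)^2 * ((D.card:ℝ)^2)
        ≤ (B.card:ℝ)^2 * (((h p₀ : ℝ) + (D.card:ℝ)/(B.card:ℝ)) * ((A*A).card:ℝ)) := by
      have e2 : (B.card:ℝ)^2 * (((h p₀ : ℝ) + (D.card:ℝ)/(B.card:ℝ)) * ((A*A).card:ℝ))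
          = ((A*A).card:ℝ) * ((B.card:ℝ) * (D.card:ℝ) + (B.card:ℝ)^2 * (h p₀ : ℝ)) := by
        field_simp
        ring
      rw [e2]
      exact hER
    exact (mul_le_mul_iff_right₀ hB2pos).mp goal'
  -- extract θ
  have hp₀mem : p₀ ∈ B ×ˢ B := Finset.mem_of_mem_filter _ hp₀S
  have hp₀ne : p₀.1 ≠ p₀.2 := (Finset.mem_filter.mp hp₀S).2
  have hp1 : p₀.1 ∈ B := (Finset.mem_product.mp hp₀mem).1
  have hp2 : p₀.2 ∈ B := (Finset.mem_product.mp hp₀mem).2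
  have h2pos := hBpos _ hp2
  have h1pos := hBpos _ hp1
  have hθ0pos : 0 < p₀.1 / p₀.2 := div_pos h1pos h2pos
  have hθ0ne1 : p₀.1 / p₀.2 ≠ 1 := by
    intro hh
    exact hp₀ne (by field_simp at hh; exact hh)
  rcases lt_or_gt_of_ne hθ0ne1 with hlt | hgt
  · refine ⟨(p₀.1 / p₀.2)⁻¹, ?_, ?_, ?_⟩
    · rw [inv_div]; exact Finset.div_mem_div hp2 hp1
    · exact one_lt_inv_iff₀.mpr ⟨hθ0pos, hlt⟩
    · rw [← reflect_card D (ne_of_gt hθ0pos)]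
      exact hkey
  · exact ⟨p₀.1 / p₀.2, Finset.div_mem_div hp1 hp2, hgt, hkey⟩

set_option maxHeartbeats 1000000 in
/-- Multiplicative Szemerédi cube lemma: if `|A·A| < n^{1+ε}` and `B ⊆ A` with
`|B| ≥ n^c`, there are `θ₁,…,θ_k ∈ B/B`, each `> 1`, such that at least
`n^{1−O_k(c)}` elements `d ∈ A` have all `2^k` products `θ₁^{γ₁}⋯θ_k^{γ_k}·d` in `A`. -/
theorem stmt_12 (k : ℕ) (hk : 2 ≤ k) :
    ∃ Ck : ℝ, 0 < Ck ∧ ∃ c₀ : ℝ, 0 < c₀ ∧ ∀ c : ℝ, 0 < c → c < c₀ →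
      ∃ ε₀ : ℝ, 0 < ε₀ ∧ ∀ ε : ℝ, 0 < ε → ε < ε₀ →
        ∃ n₀ : ℕ, ∀ n : ℕ, n₀ < n → ∀ A B : Finset ℝ,
          A.card = n → (∀ a ∈ A, (0:ℝ) < a) → B ⊆ A →
          ((A * A).card : ℝ) < (n : ℝ) ^ ((1 : ℝ) + ε) →
          (n : ℝ) ^ c ≤ (B.card : ℝ) →
          ∃ θ : Fin k → ℝ, (∀ i, θ i ∈ B / B ∧ 1 < θ i) ∧
            (n : ℝ) ^ ((1 : ℝ) - Ck * c) ≤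
              (((A.filter (fun d => ∀ γ : Fin k → Bool,
                (∏ i, if γ i then θ i else 1) * d ∈ A)).card : ℝ)) := by
  refine ⟨1, one_pos, 1, one_pos, fun c hc hc1 => ?_⟩
  refine ⟨c / 2 ^ (k + 3), by positivity, fun ε hε hεlt => ?_⟩
  refine ⟨⌈(2:ℝ) ^ (1/ε)⌉₊ + ⌈(2:ℝ) ^ (1/c)⌉₊ + 1, fun n hn A B hcard hApos hBA hAAub hBc => ?_⟩
  -- basic facts
  have hnR : ((⌈(2:ℝ) ^ (1/ε)⌉₊ : ℝ) + (⌈(2:ℝ) ^ (1/c)⌉₊ : ℝ) + 1) < (n : ℝ) := by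
    exact_mod_cast (by push_cast; exact_mod_cast Nat.cast_lt.mpr hn : ((⌈(2:ℝ)^(1/ε)⌉₊ + ⌈(2:ℝ)^(1/c)⌉₊ + 1 : ℕ) : ℝ) < (n:ℝ))
  have hceilε : (2:ℝ) ^ (1/ε) ≤ (n : ℝ) := by
    have := Nat.le_ceil ((2:ℝ) ^ (1/ε))
    have h2 : (0:ℝ) ≤ (⌈(2:ℝ) ^ (1/c)⌉₊ : ℝ) := by positivity
    linarith
  have hceilc : (2:ℝ) ^ (1/c) ≤ (n : ℝ) := by
    have := Nat.le_ceil ((2:ℝ) ^ (1/c))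
    have h2 : (0:ℝ) ≤ (⌈(2:ℝ) ^ (1/ε)⌉₊ : ℝ) := by positivity
    linarith
  have hn0 : (0:ℝ) < (n:ℝ) := lt_of_le_of_lt (by positivity) hnR
  have hn1 : (1:ℝ) ≤ (n:ℝ) := by
    have ha : (0:ℝ) ≤ (⌈(2:ℝ) ^ (1/ε)⌉₊ : ℝ) := Nat.cast_nonneg _
    have hb : (0:ℝ) ≤ (⌈(2:ℝ) ^ (1/c)⌉₊ : ℝ) := Nat.cast_nonneg _
    linarith
  have hpow2 : ∀ x : ℝ, 0 < x → (2:ℝ) ^ (1/x) ≤ (n:ℝ) → (2:ℝ) ≤ (n:ℝ) ^ x := by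
    intro x hx hle
    have h1 : ((2:ℝ) ^ (1/x)) ^ x ≤ (n:ℝ) ^ x :=
      Real.rpow_le_rpow (by positivity) hle hx.le
    rwa [← Real.rpow_mul (by norm_num : (0:ℝ) ≤ 2), one_div, inv_mul_cancel₀ hx.ne',
      Real.rpow_one] at h1
  have hnε : (2:ℝ) ≤ (n:ℝ) ^ ε := hpow2 ε hε hceilε
  have hnc2 : (2:ℝ) ≤ (n:ℝ) ^ c := hpow2 c hc hceilc
  have hB2 : 2 ≤ B.card := by exact_mod_cast le_trans hnc2 hBc
  have hAne : A.Nonempty := by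
    rw [← Finset.card_pos, hcard]
    exact_mod_cast hn0
  have hAA0 : (0:ℝ) < ((A*A).card : ℝ) := by
    exact_mod_cast Finset.card_pos.mpr (hAne.mul hAne)
  have hεc : (2:ℝ) ^ (k+3) * ε < c := by
    have h2p : (0:ℝ) < (2:ℝ) ^ (k+3) := by positivity
    calc (2:ℝ) ^ (k+3) * ε < (2:ℝ) ^ (k+3) * (c / 2 ^ (k+3)) := by
          exact mul_lt_mul_of_pos_left hεlt h2p
      _ = c := by field_simp
  -- main induction
  have key : ∀ j : ℕ, j ≤ k → ∃ (θ : Fin j → ℝ) (D : Finset ℝ), D ⊆ A ∧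
      (∀ i, θ i ∈ B / B ∧ 1 < θ i) ∧
      (∀ d ∈ D, ∀ γ : Fin j → Bool, (∏ i, if γ i then θ i else 1) * d ∈ A) ∧
      (n:ℝ) ^ ((1:ℝ) - ((2:ℝ) ^ (j+1) - 2) * ε) ≤ (D.card : ℝ) := by
    intro j
    induction j with
    | zero =>
      intro _
      refine ⟨Fin.elim0, A, Finset.Subset.rfl, fun i => i.elim0,
        fun d hd γ => by simpa using hd, ?_⟩
      norm_num
      rw [hcard]
    | succ j ih =>
      intro hjk
      obtain ⟨θ, D, hDA, hθ, hprop, hDcard⟩ := ih (Nat.le_of_succ_le hjk)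
      obtain ⟨θn, hθnBB, hθn1, hstep⟩ := step_lemma hApos hBA hDA hB2
      set D' : Finset ℝ := D.filter (fun d => θn * d ∈ D) with hD'
      refine ⟨Fin.snoc θ θn, D', (Finset.filter_subset _ _).trans hDA, ?_, ?_, ?_⟩
      · intro i
        refine Fin.lastCases ?_ ?_ i
        · rw [Fin.snoc_last]
          exact ⟨hθnBB, hθn1⟩
        · intro i0
          rw [Fin.snoc_castSucc]
          exact hθ i0
      · intro d hd γ
        rw [Fin.prod_univ_castSucc]
        simp only [Fin.snoc_castSucc, Fin.snoc_last]
        rw [Finset.mem_filter] at hd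
        cases hγ : γ (Fin.last j) with
        | true =>
          have h5 : (if (true : Bool) = true then θn else 1) = θn := if_pos rfl
          rw [h5, mul_assoc]
          exact hprop (θn * d) hd.2 (fun i => γ i.castSucc)
        | false =>
          have h5 : (if (false : Bool) = true then θn else 1) = 1 := if_neg (by simp)
          rw [h5, mul_one]
          exact hprop d hd.1 (fun i => γ i.castSucc)
      · -- cardinality bound
        set b : ℝ := ((2:ℝ) ^ (j+1) - 2) * ε with hb
        have hbnn : 0 ≤ b := by
          have : (2:ℝ) ≤ (2:ℝ) ^ (j+1) := by
            calc (2:ℝ) = 2 ^ 1 := by norm_num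
              _ ≤ 2 ^ (j+1) := by
                apply pow_le_pow_right₀ (by norm_num)
                omega
          have := sub_nonneg.mpr this
          positivity
        have hexp : (1:ℝ) - ((2:ℝ) ^ (j+1+1) - 2) * ε = 1 - 2*b - 2*ε := by
          rw [hb, pow_succ]
          ring
        rw [hexp]
        -- key exponent inequality: 2*b + 3*ε ≤ c
        have hcb : 2*b + 3*ε ≤ c := by
          have h1 : (2:ℝ) ^ (j+1) ≤ (2:ℝ) ^ (k+1) := by
            apply pow_le_pow_right₀ (by norm_num)
            omega
          have h2 : (2:ℝ) ^ (k+1) * 4 = (2:ℝ) ^ (k+3) := by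
            rw [pow_succ, pow_succ]
            ring
          nlinarith [hεc, hε.le]
        have hq1 : (n:ℝ) ^ ((1:ℝ) - 2*b - ε) - (n:ℝ) ^ ((1:ℝ) - c)
            ≤ (D'.card : ℝ) := by
          have hd1 : (n:ℝ) ^ ((1:ℝ) - 2*b - ε)
              ≤ (D.card : ℝ)^2 / ((A*A).card : ℝ) := by
            have hnum : (n:ℝ) ^ ((2:ℝ) - 2*b) ≤ (D.card : ℝ)^2 := by
              have := hDcard
              calc (n:ℝ) ^ ((2:ℝ) - 2*b) = ((n:ℝ) ^ ((1:ℝ) - b))^2 := by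
                    rw [sq, ← Real.rpow_add hn0]
                    congr 1
                    ring
                _ ≤ (D.card : ℝ)^2 := by
                  apply pow_le_pow_left₀ (by positivity) this
            calc (n:ℝ) ^ ((1:ℝ) - 2*b - ε) = (n:ℝ) ^ ((2:ℝ) - 2*b) / (n:ℝ) ^ ((1:ℝ) + ε) := by
                  rw [← Real.rpow_sub hn0]
                  congr 1
                  ring
              _ ≤ (D.card : ℝ)^2 / ((A*A).card : ℝ) := by
                apply div_le_div₀ (by positivity) hnum hAA0 hAAub.le
          have hd2 : (D.card : ℝ) / (B.card : ℝ) ≤ (n:ℝ) ^ ((1:ℝ) - c) := by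
            have hDn : (D.card : ℝ) ≤ (n:ℝ) := by
              rw [← hcard]
              exact_mod_cast Finset.card_le_card hDA
            have hBpos : (0:ℝ) < (B.card : ℝ) := lt_of_lt_of_le (by positivity) hBc
            calc (D.card : ℝ) / (B.card : ℝ) ≤ (n:ℝ) / (n:ℝ) ^ c := by
                  apply div_le_div₀ hn0.le hDn (by positivity) hBc
              _ = (n:ℝ) ^ ((1:ℝ) - c) := by
                  rw [Real.rpow_sub hn0, Real.rpow_one]
          have := hstep
          linarith
        -- lower-bound the difference
        have hq2 : (n:ℝ) ^ ((1:ℝ) - 2*b - 2*ε)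
            ≤ (n:ℝ) ^ ((1:ℝ) - 2*b - ε) - (n:ℝ) ^ ((1:ℝ) - c) := by
          have hM : (0:ℝ) < (n:ℝ) ^ ((1:ℝ) - 2*b - 3*ε) := by positivity
          have e1 : (n:ℝ) ^ ((1:ℝ) - 2*b - ε)
              = (n:ℝ) ^ ((1:ℝ) - 2*b - 3*ε) * ((n:ℝ)^ε * (n:ℝ)^ε) := by
            rw [← Real.rpow_add hn0, ← Real.rpow_add hn0]
            congr 1
            ring
          have e2 : (n:ℝ) ^ ((1:ℝ) - 2*b - 2*ε)
              = (n:ℝ) ^ ((1:ℝ) - 2*b - 3*ε) * (n:ℝ)^ε := by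
            rw [← Real.rpow_add hn0]
            congr 1
            ring
          have e3 : (n:ℝ) ^ ((1:ℝ) - c) ≤ (n:ℝ) ^ ((1:ℝ) - 2*b - 3*ε) := by
            apply Real.rpow_le_rpow_of_exponent_le hn1
            linarith
          rw [e1, e2]
          have h6 : 0 ≤ (n:ℝ) ^ ((1:ℝ) - 2*b - 3*ε) * ((n:ℝ)^ε * (n:ℝ)^ε - (n:ℝ)^ε - 1) :=
            mul_nonneg hM.le (by nlinarith [hnε])
          nlinarith [e3, h6]
        linarith
  obtain ⟨θ, D, hDA, hθ, hprop, hDcard⟩ := key k le_rfl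
  refine ⟨θ, hθ, ?_⟩
  have hsub : D ⊆ A.filter (fun d => ∀ γ : Fin k → Bool,
      (∏ i, if γ i then θ i else 1) * d ∈ A) := by
    intro d hd
    rw [Finset.mem_filter]
    exact ⟨hDA hd, fun γ => hprop d hd γ⟩
  have hcards : (D.card : ℝ) ≤ _ := Nat.cast_le.mpr (Finset.card_le_card hsub)
  refine le_trans ?_ (le_trans hDcard hcards)
  apply Real.rpow_le_rpow_of_exponent_le hn1
  have h1 : (2:ℝ) ^ (k+1) ≤ (2:ℝ) ^ (k+3) := by
    apply pow_le_pow_right₀ (by norm_num)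
    omega
  nlinarith [hεc, hε.le]
end
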